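/- For S = (s_1,...,s_p) with no s_i an eigenvalue of A, F(S) := (Y(S)^T X(S))^{-1} (Y(S)^T A X(S)) = diag(S) + (Y(S)^T X(S))^{-1} e e^T diag(1/(c^T(A-s_1 I)^{-1}b), ..., 1/(c^T(A-s_p I)^{-1}b)), where e = (1,...,1)^T ∈ C^p, using Y(S)^T b = e. -/
import Mathlib


open Matrix

/-- Off the spectrum,
`F(S) = diag(S) + (Y(S)ᵀX(S))⁻¹ e eᵀ diag(1/(cᵀ(A-sᵢI)⁻¹b))ᵢ`. -/
theorem stmt_8 {n p : ℕ}
    (A : Matrix (Fin n) (Fin n) ℂ) (b c : Fin n → ℂ)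
    (s : Fin p → ℂ)
    (hinv : ∀ i : Fin p, IsUnit (A - s i • (1 : Matrix (Fin n) (Fin n) ℂ)))
    (hden : ∀ i : Fin p,
      c ⬝ᵥ (A - s i • (1 : Matrix (Fin n) (Fin n) ℂ))⁻¹.mulVec b ≠ 0)
    (X Y : Matrix (Fin n) (Fin p) ℂ)
    (hX : ∀ i : Fin p, (fun r => X r i)
      = (c ⬝ᵥ (A - s i • (1 : Matrix (Fin n) (Fin n) ℂ))⁻¹.mulVec b)⁻¹ •
          (A - s i • (1 : Matrix (Fin n) (Fin n) ℂ))⁻¹.mulVec b)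
    (hY : ∀ i : Fin p, (fun r => Y r i)
      = (c ⬝ᵥ (A - s i • (1 : Matrix (Fin n) (Fin n) ℂ))⁻¹.mulVec b)⁻¹ •
          (Aᵀ - s i • (1 : Matrix (Fin n) (Fin n) ℂ))⁻¹.mulVec c)
    (hYX : IsUnit (Yᵀ * X)) :
    (Yᵀ * X)⁻¹ * (Yᵀ * A * X)
      = Matrix.diagonal s + (Yᵀ * X)⁻¹ *
          Matrix.of (fun _ j : Fin p =>
            (c ⬝ᵥ (A - s j • (1 : Matrix (Fin n) (Fin n) ℂ))⁻¹.mulVec b)⁻¹) := by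
  set B : Fin p → Matrix (Fin n) (Fin n) ℂ :=
    fun i => A - s i • (1 : Matrix (Fin n) (Fin n) ℂ) with hB
  set d : Fin p → ℂ := fun i => c ⬝ᵥ (B i)⁻¹.mulVec b with hd
  -- Step 1: A * X = X * diagonal s + N where N r j = b r * (d j)⁻¹
  have hAX : A * X = X * Matrix.diagonal s +
      Matrix.of (fun (r : Fin n) (j : Fin p) => b r * (d j)⁻¹) := by
    ext r j
    have hcol := congrFun (hX j)
    have hBinv : B j * (B j)⁻¹ = 1 := Matrix.mul_nonsing_inv _ (((Matrix.isUnit_iff_isUnit_det _).mp (hinv j)))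
    -- A *ᵥ x_j = s j • x_j + (d j)⁻¹ • b
    have key : (A *ᵥ (fun r => X r j)) r = s j * X r j + b r * (d j)⁻¹ := by
      have h1 : A *ᵥ (fun r => X r j)
          = (d j)⁻¹ • (A *ᵥ ((B j)⁻¹ *ᵥ b)) := by
        rw [hX j, Matrix.mulVec_smul]
      have h2 : A *ᵥ ((B j)⁻¹ *ᵥ b) = b + s j • ((B j)⁻¹ *ᵥ b) := by
        have : A = B j + s j • (1 : Matrix (Fin n) (Fin n) ℂ) := by
          simp [hB]
        rw [this, Matrix.add_mulVec, Matrix.mulVec_mulVec, hBinv]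
        simp [Matrix.smul_mulVec]
      rw [h1, h2]
      have := congrFun (hX j) r
      simp only [Pi.smul_apply, smul_eq_mul] at this ⊢
      rw [Pi.add_apply] at *
      simp only [Pi.smul_apply, smul_eq_mul]
      rw [this]
      ring
    have hm : (A * X) r j = (A *ᵥ (fun r => X r j)) r := by
      simp [Matrix.mul_apply, Matrix.mulVec, dotProduct]
    rw [hm, key]
    simp [Matrix.mul_apply, Matrix.diagonal, Finset.sum_ite_eq, mul_comm]
  -- Step 2: Yᵀ *ᵥ b = e  (i.e. ∑ r, Y r i * b r = 1)
  have hYb : ∀ i : Fin p, (fun r => Y r i) ⬝ᵥ b = 1 := by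
    intro i
    have hcol := hY i
    have hBt : (Aᵀ - s i • (1 : Matrix (Fin n) (Fin n) ℂ)) = (B i)ᵀ := by
      simp [hB, Matrix.transpose_sub, Matrix.transpose_smul]
    have : (fun r => Y r i) = (d i)⁻¹ • ((B i)ᵀ)⁻¹ *ᵥ c := by
      rw [hcol, hBt]
    rw [this]
    have hti : ((B i)ᵀ)⁻¹ = ((B i)⁻¹)ᵀ := (Matrix.transpose_nonsing_inv _).symm
    have h2 : (((B i)⁻¹)ᵀ *ᵥ c) ⬝ᵥ b = c ⬝ᵥ ((B i)⁻¹ *ᵥ b) := by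
      rw [← Matrix.vecMul_transpose, Matrix.transpose_transpose,
        ← Matrix.dotProduct_mulVec]
    rw [hti, smul_dotProduct, h2, smul_eq_mul]
    exact inv_mul_cancel₀ (hden i)
  -- Step 3: Yᵀ * (A * X) = Yᵀ * X * diagonal s + E
  have hE : Yᵀ * A * X = Yᵀ * X * Matrix.diagonal s +
      Matrix.of (fun (_ j : Fin p) => (d j)⁻¹) := by
    have : Yᵀ * A * X = Yᵀ * (A * X) := by rw [Matrix.mul_assoc]
    rw [this, hAX, Matrix.mul_add, ← Matrix.mul_assoc]
    congr 1
    ext i j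
    have := hYb i
    simp only [Matrix.mul_apply, Matrix.transpose_apply, Matrix.of_apply]
    simp only [dotProduct] at this
    calc ∑ r, Y r i * (b r * (d j)⁻¹)
        = (∑ r, Y r i * b r) * (d j)⁻¹ := by rw [Finset.sum_mul]; congr 1; ext r; ring
      _ = (d j)⁻¹ := by rw [this, one_mul]
  rw [hE, Matrix.mul_add, ← Matrix.mul_assoc, Matrix.nonsing_inv_mul _ (((Matrix.isUnit_iff_isUnit_det _).mp hYX)),
    one_mul]
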